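/- Realizable-case in-expectation bound via shifted process: in the realizable case (Y = f*(X) a.s., f* ∈ F), for any empirical risk minimizer f̂ over n i.i.d. samples and any c > 0, E[R(f̂)] ≤ E[ sup_{g ∈ G_{f*}} (P g − (1+c) P_n g) ] ≤ (2(1+c/2)²/c) · log(S_F(n))/n, where G_{f*} = { x ↦ 1[f(x) ≠ f*(x)] : f ∈ F } and S_F is the growth function. -/

import Mathlib

open MeasureTheory Finset

/-- The growth function of a class of binary classifiers. -/
noncomputable def growthFn {X : Type*} (F : Set (X → Bool)) (m : ℕ) : ℕ :=
  sSup {k : ℕ | ∃ x : Fin m → X, k = Set.ncard ((fun f => f ∘ x) '' F)}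

section AuxRealizable

lemma aux_abs_sup'_le {ι : Type*} (s : Finset ι) (hs : s.Nonempty) (f : ι → ℝ) (M : ℝ)
    (h : ∀ i ∈ s, |f i| ≤ M) : |s.sup' hs f| ≤ M := by
  obtain ⟨i0, hi0⟩ := hs
  rw [abs_le]
  constructor
  · have h1 : -M ≤ f i0 := (abs_le.1 (h i0 hi0)).1
    exact h1.trans (Finset.le_sup' f hi0)
  · exact Finset.sup'_le _ _ fun i hi => (abs_le.1 (h i hi)).2

lemma aux_const_mul_sup' {ι : Type*} (s : Finset ι) (hs : s.Nonempty) (f : ι → ℝ) (r : ℝ)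
    (hr : 0 ≤ r) : r * s.sup' hs f = s.sup' hs fun i => r * f i :=
  Finset.comp_sup'_eq_sup'_comp hs (fun x => r * x) fun x y => mul_max_of_nonneg x y hr

lemma aux_integrable_of_bdd {α : Type*} [MeasurableSpace α] {ρ : Measure α} [IsFiniteMeasure ρ]
    {h : α → ℝ} (hh : AEStronglyMeasurable h ρ) (M : ℝ) (hb : ∀ x, |h x| ≤ M) :
    Integrable h ρ :=
  ⟨hh, HasFiniteIntegral.of_bounded (C := M) (ae_of_all _ fun x => by
    simpa [Real.norm_eq_abs] using hb x)⟩

lemma aux_measurePreserving_eval {ι : Type*} [Fintype ι] {α : ι → Type*}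
    [∀ i, MeasurableSpace (α i)] (μ : ∀ i, Measure (α i)) [∀ i, IsProbabilityMeasure (μ i)]
    (j : ι) : MeasurePreserving (Function.eval j) (Measure.pi μ) (μ j) := by
  classical
  refine ⟨measurable_pi_apply j, ?_⟩
  refine Measure.ext fun s hs => ?_
  rw [Measure.map_apply (measurable_pi_apply j) hs]
  have hpre : Function.eval j ⁻¹' s
      = Set.pi Set.univ (Function.update (fun i => (Set.univ : Set (α i))) j s) := by
    ext w
    simp only [Set.mem_preimage, Set.mem_pi, Set.mem_univ, forall_true_left]
    constructor
    · intro hw i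
      rcases eq_or_ne i j with rfl | hne
      · simpa using hw
      · simp [Function.update_of_ne hne]
    · intro hw
      have := hw j
      simpa using this
  rw [hpre, Measure.pi_pi]
  rw [Fintype.prod_eq_single j]
  · simp
  · intro i hi
    simp [Function.update_of_ne hi]

set_option maxHeartbeats 1000000 in
lemma aux_offset_max {ι : Type*} {m : ℕ} (V : Finset ι) (hV : V.Nonempty)
    (d : ι → Fin m → ℝ) (a b : ℝ) (ha : 0 < a) (hb : 0 < b) :
    ∑ ε : Fin m → Bool, V.sup' hV (fun v => ∑ i,
        (a * (if ε i then -1 else 1) * d v i - b * d v i ^ 2))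
      ≤ 2 ^ m * (a ^ 2 / (2 * b) * Real.log V.card) := by
  classical
  set L : ℝ := 2 * b / a ^ 2 with hLdef
  have hL : 0 < L := by positivity
  set f : (Fin m → Bool) → ι → ℝ := fun ε v => ∑ i,
    (a * (if ε i then -1 else 1) * d v i - b * d v i ^ 2) with hfdef
  set S : (Fin m → Bool) → ℝ := fun ε => ∑ v ∈ V, Real.exp (L * f ε v) with hSdef
  have hSpos : ∀ ε, 0 < S ε := fun ε =>
    Finset.sum_pos (fun v _ => Real.exp_pos _) hV
  have h1 : ∀ ε, V.sup' hV (f ε) ≤ L⁻¹ * Real.log (S ε) := by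
    intro ε
    obtain ⟨v0, hv0, hEq⟩ := V.exists_mem_eq_sup' hV (f ε)
    rw [hEq]
    have hexp : Real.exp (L * f ε v0) ≤ S ε :=
      Finset.single_le_sum (f := fun v => Real.exp (L * f ε v))
        (fun v _ => (Real.exp_pos _).le) hv0
    have hlog : L * f ε v0 ≤ Real.log (S ε) := by
      have := Real.log_le_log (Real.exp_pos _) hexp
      rwa [Real.log_exp] at this
    calc f ε v0 = L⁻¹ * (L * f ε v0) := by field_simp
    _ ≤ L⁻¹ * Real.log (S ε) := by gcongr
  have hSavg : ∑ ε : Fin m → Bool, S ε ≤ V.card * 2 ^ m := by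
    have hswap : ∑ ε : Fin m → Bool, S ε
        = ∑ v ∈ V, ∑ ε : Fin m → Bool, Real.exp (L * f ε v) := Finset.sum_comm
    rw [hswap]
    have hv : ∀ v ∈ V, ∑ ε : Fin m → Bool, Real.exp (L * f ε v) ≤ 2 ^ m := by
      intro v _
      have hprod : ∀ ε : Fin m → Bool, Real.exp (L * f ε v)
          = ∏ i, Real.exp (L * (a * (if ε i then -1 else 1) * d v i - b * d v i ^ 2)) := by
        intro ε
        rw [← Real.exp_sum, ← Finset.mul_sum]
      simp_rw [hprod]
      have hdecouple : ∑ ε : Fin m → Bool, ∏ i,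
          Real.exp (L * (a * (if ε i then -1 else 1) * d v i - b * d v i ^ 2))
          = ∏ i, ∑ β ∈ (Finset.univ : Finset Bool),
            Real.exp (L * (a * (if β then -1 else 1) * d v i - b * d v i ^ 2)) := by
        rw [← Finset.sum_prod_piFinset]
        rw [Fintype.piFinset_univ]
      rw [hdecouple]
      have hfac : ∀ i, ∑ β ∈ (Finset.univ : Finset Bool),
          Real.exp (L * (a * (if β then -1 else 1) * d v i - b * d v i ^ 2)) ≤ 2 := by
        intro i
        rw [Fintype.sum_bool]
        norm_num
        set t := d v i
        have hco : Real.exp (L * (-(a * t) - b * t ^ 2)) + Real.exp (L * (a * t - b * t ^ 2))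
            = 2 * Real.cosh (L * a * t) * Real.exp (-(L * b * t ^ 2)) := by
          rw [Real.cosh_eq]
          have e1 : L * (-(a * t) - b * t ^ 2) = -(L * a * t) + -(L * b * t ^ 2) := by ring
          have e2 : L * (a * t - b * t ^ 2) = L * a * t + -(L * b * t ^ 2) := by ring
          rw [e1, e2, Real.exp_add, Real.exp_add]
          ring
        rw [hco]
        have hcosh : Real.cosh (L * a * t) ≤ Real.exp ((L * a * t) ^ 2 / 2) :=
          Real.cosh_le_exp_half_sq _
        have hexpid : (L * a * t) ^ 2 / 2 = L * b * t ^ 2 := by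
          rw [hLdef]; field_simp
        calc 2 * Real.cosh (L * a * t) * Real.exp (-(L * b * t ^ 2))
            ≤ 2 * Real.exp ((L * a * t) ^ 2 / 2) * Real.exp (-(L * b * t ^ 2)) := by
              have := Real.exp_pos (-(L * b * t ^ 2))
              nlinarith [Real.cosh_pos (x := L * a * t)]
        _ = 2 := by rw [hexpid, mul_assoc, ← Real.exp_add, add_neg_cancel, Real.exp_zero, mul_one]
      calc ∏ i, ∑ β ∈ (Finset.univ : Finset Bool),
            Real.exp (L * (a * (if β then -1 else 1) * d v i - b * d v i ^ 2))
          ≤ ∏ _i : Fin m, (2 : ℝ) := by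
            refine Finset.prod_le_prod (fun i _ => ?_) (fun i _ => hfac i)
            exact Finset.sum_nonneg fun β _ => (Real.exp_pos _).le
      _ = 2 ^ m := by simp
    calc ∑ v ∈ V, ∑ ε : Fin m → Bool, Real.exp (L * f ε v)
        ≤ ∑ _v ∈ V, (2 : ℝ) ^ m := Finset.sum_le_sum hv
    _ = V.card * 2 ^ m := by rw [Finset.sum_const, nsmul_eq_mul]
  have hcard : (Finset.univ : Finset (Fin m → Bool)).card = 2 ^ m := by
    simp [Fintype.card_fun]
  have hJensen : ∑ ε : Fin m → Bool, ((2 : ℝ) ^ m)⁻¹ * Real.log (S ε)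
      ≤ Real.log (∑ ε : Fin m → Bool, ((2 : ℝ) ^ m)⁻¹ * S ε) := by
    have hconc := (strictConcaveOn_log_Ioi).concaveOn
    have := hconc.le_map_sum (t := (Finset.univ : Finset (Fin m → Bool)))
      (w := fun _ => ((2 : ℝ) ^ m)⁻¹) (p := S)
      (fun _ _ => by positivity)
      (by rw [Finset.sum_const, hcard, nsmul_eq_mul]; field_simp; norm_num)
      (fun ε _ => hSpos ε)
    simpa [smul_eq_mul] using this
  have hfinal : ∑ ε : Fin m → Bool, ((2 : ℝ) ^ m)⁻¹ * S ε ≤ V.card := by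
    rw [← Finset.mul_sum]
    rw [inv_mul_le_iff₀ (by positivity)]
    calc ∑ ε : Fin m → Bool, S ε ≤ V.card * 2 ^ m := hSavg
    _ = 2 ^ m * V.card := by ring
  have hlogV : Real.log (∑ ε : Fin m → Bool, ((2 : ℝ) ^ m)⁻¹ * S ε) ≤ Real.log V.card := by
    refine Real.log_le_log ?_ hfinal
    exact Finset.sum_pos (fun ε _ => by have := hSpos ε; positivity)
      ⟨fun _ => true, Finset.mem_univ _⟩
  calc ∑ ε : Fin m → Bool, V.sup' hV (f ε)
      ≤ ∑ ε : Fin m → Bool, L⁻¹ * Real.log (S ε) := Finset.sum_le_sum fun ε _ => h1 ε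
  _ = L⁻¹ * (2 ^ m * ∑ ε : Fin m → Bool, ((2 : ℝ) ^ m)⁻¹ * Real.log (S ε)) := by
      have key : (2 : ℝ) ^ m * ∑ ε : Fin m → Bool, ((2 : ℝ) ^ m)⁻¹ * Real.log (S ε)
          = ∑ ε : Fin m → Bool, Real.log (S ε) := by
        rw [← Finset.mul_sum, ← mul_assoc, mul_inv_cancel₀ (by positivity : ((2:ℝ) ^ m) ≠ 0),
          one_mul]
      rw [key, ← Finset.mul_sum]
  _ ≤ L⁻¹ * (2 ^ m * Real.log V.card) := by
      have h2 := hJensen.trans hlogV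
      have hL' : (0:ℝ) ≤ L⁻¹ := by positivity
      have h2m : (0:ℝ) ≤ 2 ^ m := by positivity
      nlinarith [mul_le_mul_of_nonneg_left (mul_le_mul_of_nonneg_left h2 h2m) hL']
  _ = 2 ^ m * (a ^ 2 / (2 * b) * Real.log V.card) := by
      rw [hLdef]
      field_simp

set_option maxHeartbeats 1000000 in
lemma aux_image_card_le_growth {X : Type*} {n : ℕ} (F : Finset (X → Bool))
    (x : Fin n → X) :
    (F.image fun f : X → Bool => f ∘ x).card ≤ growthFn (↑F : Set (X → Bool)) n := by
  classical
  have hBdd : BddAbove {k : ℕ | ∃ x' : Fin n → X,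
      k = Set.ncard ((fun f : X → Bool => f ∘ x') '' (↑F : Set (X → Bool)))} := by
    refine ⟨F.card, fun k hk => ?_⟩
    obtain ⟨x', rfl⟩ := hk
    calc Set.ncard ((fun f : X → Bool => f ∘ x') '' (↑F : Set (X → Bool)))
        ≤ Set.ncard (↑F : Set (X → Bool)) := Set.ncard_image_le F.finite_toSet
    _ = F.card := Set.ncard_coe_finset F
  refine le_csSup hBdd ⟨x, ?_⟩
  rw [← Finset.coe_image, Set.ncard_coe_finset]

set_option maxHeartbeats 1000000 in
lemma aux_pair_card_le {X : Type*} {n : ℕ}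
    (F : Finset (X → Bool)) (w : (Fin n ⊕ Fin n) → X) :
    ((F.image fun f : X → Bool => f ∘ w).card : ℕ) ≤
      ((F.image fun f : X → Bool => f ∘ (w ∘ Sum.inl)).card) *
        ((F.image fun f : X → Bool => f ∘ (w ∘ Sum.inr)).card) := by
  classical
  have := Finset.card_le_card_of_injOn
    (f := fun v : (Fin n ⊕ Fin n) → Bool => ((fun i => v (Sum.inl i), fun i => v (Sum.inr i)) :
      (Fin n → Bool) × (Fin n → Bool)))
    (s := F.image fun f : X → Bool => f ∘ w)
    (t := (F.image fun f : X → Bool => f ∘ (w ∘ Sum.inl)) ×ˢ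
      (F.image fun f : X → Bool => f ∘ (w ∘ Sum.inr)))
    (by
      intro v hv
      simp only [Finset.mem_coe, Finset.mem_image] at hv
      obtain ⟨f, hf, rfl⟩ := hv
      simp only [Finset.mem_coe, Finset.mem_product, Finset.mem_image]
      exact ⟨⟨f, hf, rfl⟩, ⟨f, hf, rfl⟩⟩)
    (by
      intro v1 _ v2 _ h
      funext j
      cases j with
      | inl i => exact congrFun (congrArg Prod.fst h) i
      | inr i => exact congrFun (congrArg Prod.snd h) i)
  simpa [Finset.card_product] using this


lemma aux_sup'_measurable {α : Type*} [MeasurableSpace α] {ι : Type*} (s : Finset ι)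
    (hs : s.Nonempty) (G : ι → α → ℝ) (hG : ∀ i ∈ s, Measurable (G i)) :
    Measurable fun a => s.sup' hs fun i => G i a := by
  have h : (fun a => s.sup' hs fun i => G i a) = s.sup' hs G :=
    funext fun a => (Finset.sup'_apply hs G a).symm
  rw [h]
  exact Finset.measurable_sup' hs hG

end AuxRealizable

set_option maxHeartbeats 3000000 in
open Classical in
theorem realizable_erm_bound {𝒳 : Type*} [MeasurableSpace 𝒳]
    (μ : Measure 𝒳) [IsProbabilityMeasure μ]
    (n : ℕ) (hn : 0 < n) (F : Finset (𝒳 → Bool)) (hF : F.Nonempty)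
    (hmeas : ∀ f ∈ F, Measurable f)
    (fs : 𝒳 → Bool) (hfsF : fs ∈ F)
    (fhat : (Fin n → 𝒳) → (𝒳 → Bool))
    (hERM_mem : ∀ z, fhat z ∈ F)
    (hERM_fit : ∀ z, ∀ i, fhat z (z i) = fs (z i))
    (hm : AEStronglyMeasurable (fun z => (μ {x | fhat z x ≠ fs x}).toReal)
      (Measure.pi fun _ : Fin n => μ))
    (c : ℝ) (hc : 0 < c) :
    (∫ z, (μ {x | fhat z x ≠ fs x}).toReal ∂(Measure.pi fun _ : Fin n => μ) ≤
      ∫ z, (F.sup' hF fun f => (μ {x | f x ≠ fs x}).toReal -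
          (1 + c) * ((n : ℝ)⁻¹ * ∑ i, if f (z i) ≠ fs (z i) then (1 : ℝ) else 0))
        ∂(Measure.pi fun _ : Fin n => μ)) ∧
    (∫ z, (F.sup' hF fun f => (μ {x | f x ≠ fs x}).toReal -
          (1 + c) * ((n : ℝ)⁻¹ * ∑ i, if f (z i) ≠ fs (z i) then (1 : ℝ) else 0))
        ∂(Measure.pi fun _ : Fin n => μ) ≤
      (2 * (1 + c / 2) ^ 2 / c) * Real.log (growthFn (↑F : Set (𝒳 → Bool)) n) / n) := by

  classical
  -- Nonempty 𝒳
  have hX : Nonempty 𝒳 := by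
    by_contra h
    rw [not_nonempty_iff] at h
    have h1 : μ Set.univ = 1 := measure_univ
    rw [Set.univ_eq_empty_iff.2 h, measure_empty] at h1
    exact zero_ne_one h1
  have hfsM : Measurable fs := hmeas fs hfsF
  set μn : Measure (Fin n → 𝒳) := Measure.pi fun _ : Fin n => μ with hμn
  set p : (𝒳 → Bool) → ℝ := fun f => (μ {x | f x ≠ fs x}).toReal with hp
  set g : (𝒳 → Bool) → 𝒳 → ℝ := fun f x => if f x ≠ fs x then (1 : ℝ) else 0 with hg
  set emp : (𝒳 → Bool) → (Fin n → 𝒳) → ℝ := fun f z => (n : ℝ)⁻¹ * ∑ i, g f (z i) with hemp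
  have hnR : (0:ℝ) < n := by exact_mod_cast hn
  have hsetM : ∀ f, Measurable f → MeasurableSet {x | f x ≠ fs x} := by
    intro f hf
    have hh : {x | f x ≠ fs x} = (fun x => (f x, fs x)) ⁻¹' {q : Bool × Bool | q.1 ≠ q.2} := rfl
    rw [hh]
    exact (hf.prodMk hfsM) ((Set.to_countable _).measurableSet)
  have hgM : ∀ f ∈ F, Measurable (g f) := fun f hf =>
    Measurable.ite (hsetM f (hmeas f hf)) measurable_const measurable_const
  have hg01 : ∀ f x, g f x = 0 ∨ g f x = 1 := by
    intro f x
    by_cases h : f x ≠ fs x <;> simp [hg, h]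
  have hgnn : ∀ f x, 0 ≤ g f x := by
    intro f x; rcases hg01 f x with h | h <;> rw [h] <;> norm_num
  have hgle : ∀ f x, g f x ≤ 1 := by
    intro f x; rcases hg01 f x with h | h <;> rw [h] <;> norm_num
  have hp01 : ∀ f, 0 ≤ p f ∧ p f ≤ 1 := by
    intro f
    refine ⟨ENNReal.toReal_nonneg, ?_⟩
    have h1 : μ {x | f x ≠ fs x} ≤ 1 := prob_le_one
    have h2 := ENNReal.toReal_mono ENNReal.one_ne_top h1
    simpa using h2
  have hgInt : ∀ f ∈ F, ∫ x, g f x ∂μ = p f := by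
    intro f hf
    have hind : g f = Set.indicator {x | f x ≠ fs x} (fun _ => (1:ℝ)) := by
      funext x
      by_cases h : f x ≠ fs x
      · rw [hg]; simp only [if_pos h]
        exact (Set.indicator_of_mem (show x ∈ {x | f x ≠ fs x} from h) (fun _ => (1:ℝ))).symm
      · rw [hg]; simp only [if_neg h]
        exact (Set.indicator_of_notMem (show x ∉ {x | f x ≠ fs x} from h) (fun _ => (1:ℝ))).symm
    rw [hind, integral_indicator_const (1:ℝ) (hsetM f (hmeas f hf)), smul_eq_mul, mul_one]
    rfl
  have hempnn : ∀ f z, 0 ≤ emp f z := fun f z =>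
    mul_nonneg (by positivity) (Finset.sum_nonneg fun i _ => hgnn f _)
  have hemple : ∀ f z, emp f z ≤ 1 := by
    intro f z
    have hsum : ∑ i, g f (z i) ≤ (n:ℝ) := by
      calc ∑ i, g f (z i) ≤ ∑ _i : Fin n, (1:ℝ) := Finset.sum_le_sum fun i _ => hgle f (z i)
      _ = n := by simp
    calc emp f z ≤ (n:ℝ)⁻¹ * n := by
          rw [hemp]
          exact mul_le_mul_of_nonneg_left hsum (by positivity)
    _ = 1 := by field_simp
  have hdiffbd : ∀ (A B : ℝ), 0 ≤ A → A ≤ 1 → 0 ≤ B → B ≤ 1 → |A - (1+c) * B| ≤ 2 + c := by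
    intro A B h1 h2 h3 h4
    rw [abs_le]; constructor <;> nlinarith
  have hempM : ∀ f ∈ F, Measurable (emp f) := by
    intro f hf
    refine Measurable.const_mul ?_ _
    exact Finset.measurable_sum _ fun i _ => (hgM f hf).comp (measurable_pi_apply i)
  -- Φ
  set Φ : (Fin n → 𝒳) → ℝ := fun z => F.sup' hF fun f => p f - (1 + c) * emp f z with hΦ
  have hΦM : Measurable Φ :=
    aux_sup'_measurable F hF _ fun f hf => measurable_const.sub ((hempM f hf).const_mul _)
  have hΦbd : ∀ z, |Φ z| ≤ 2 + c := fun z =>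
    aux_abs_sup'_le F hF _ _ fun f hf =>
      hdiffbd _ _ (hp01 f).1 (hp01 f).2 (hempnn f z) (hemple f z)
  have hΦint : Integrable Φ μn := aux_integrable_of_bdd hΦM.aestronglyMeasurable _ hΦbd
  have hfhat_int : Integrable (fun z => p (fhat z)) μn :=
    aux_integrable_of_bdd hm 1 fun z => by
      rw [abs_of_nonneg (hp01 _).1]; exact (hp01 _).2
  -- Part 1
  have hpart1 : ∫ z, p (fhat z) ∂μn ≤ ∫ z, Φ z ∂μn := by
    refine integral_mono hfhat_int hΦint fun z => ?_
    show p (fhat z) ≤ Φ z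
    have hz : emp (fhat z) z = 0 := by
      rw [hemp]
      have hzero : ∑ i, g (fhat z) (z i) = 0 := Finset.sum_eq_zero fun i _ => by
        rw [hg]; simp [hERM_fit z i]
      simp only
      rw [hzero, mul_zero]
    have heq : p (fhat z) = p (fhat z) - (1 + c) * emp (fhat z) z := by rw [hz]; ring
    rw [heq]
    exact Finset.le_sup' (fun f => p f - (1 + c) * emp f z) (hERM_mem z)
  refine ⟨hpart1, ?_⟩
  -- Part 2
  set ν : Measure ((Fin n ⊕ Fin n) → 𝒳) := Measure.pi fun _ : Fin n ⊕ Fin n => μ with hν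
  set Ψp : (Fin n → 𝒳) × (Fin n → 𝒳) → ℝ :=
    fun q => F.sup' hF fun f => emp f q.2 - (1 + c) * emp f q.1 with hΨp
  set Ψ : ((Fin n ⊕ Fin n) → 𝒳) → ℝ :=
    fun w => F.sup' hF fun f =>
      emp f (fun i => w (Sum.inr i)) - (1 + c) * emp f (fun i => w (Sum.inl i)) with hΨ
  have hΨpM : Measurable Ψp :=
    aux_sup'_measurable F hF _ fun f hf =>
      ((hempM f hf).comp measurable_snd).sub (((hempM f hf).comp measurable_fst).const_mul _)
  have hΨpbd : ∀ q, |Ψp q| ≤ 2 + c := fun q =>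
    aux_abs_sup'_le F hF _ _ fun f hf =>
      hdiffbd _ _ (hempnn f q.2) (hemple f q.2) (hempnn f q.1) (hemple f q.1)
  have hΨpint : Integrable Ψp (μn.prod μn) :=
    aux_integrable_of_bdd hΨpM.aestronglyMeasurable _ hΨpbd
  have hΨM : Measurable Ψ :=
    aux_sup'_measurable F hF _ fun f hf =>
      ((hempM f hf).comp (measurable_pi_lambda _ fun i => measurable_pi_apply _)).sub
        (((hempM f hf).comp (measurable_pi_lambda _ fun i => measurable_pi_apply _)).const_mul _)
  have hΨbd : ∀ w, |Ψ w| ≤ 2 + c := fun w =>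
    aux_abs_sup'_le F hF _ _ fun f hf =>
      hdiffbd _ _ (hempnn f _) (hemple f _) (hempnn f _) (hemple f _)
  have hΨint : Integrable Ψ ν := aux_integrable_of_bdd hΨM.aestronglyMeasurable _ hΨbd
  have hempInt : ∀ f ∈ F, ∫ z, emp f z ∂μn = p f := by
    intro f hf
    have hInt1 : ∀ i : Fin n, Integrable (fun z : Fin n → 𝒳 => g f (z i)) μn :=
      fun i => aux_integrable_of_bdd
        ((hgM f hf).comp (measurable_pi_apply i)).aestronglyMeasurable 1
        (fun z => by rcases hg01 f (z i) with h | h <;> rw [h] <;> norm_num)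
    have heval : ∀ i : Fin n, ∫ z : Fin n → 𝒳, g f (z i) ∂μn = p f := by
      intro i
      have hmp := aux_measurePreserving_eval (fun _ : Fin n => μ) i
      have hcomp : ∫ z : Fin n → 𝒳, g f (z i) ∂μn = ∫ x, g f x ∂μ := by
        calc ∫ z : Fin n → 𝒳, g f (z i) ∂μn
            = ∫ x, g f x ∂(Measure.map (Function.eval i) μn) :=
              (integral_map hmp.measurable.aemeasurable
                (hgM f hf).aestronglyMeasurable).symm
        _ = ∫ x, g f x ∂μ := by rw [hmp.map_eq]
      rw [hcomp, hgInt f hf]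
    calc ∫ z, emp f z ∂μn = (n:ℝ)⁻¹ * ∫ z, ∑ i, g f (z i) ∂μn := integral_const_mul _ _
    _ = (n:ℝ)⁻¹ * ∑ i, ∫ z, g f (z i) ∂μn := by
        rw [integral_finset_sum _ fun i _ => hInt1 i]
    _ = (n:ℝ)⁻¹ * ∑ _i : Fin n, p f := by
        rw [Finset.sum_congr rfl fun i _ => heval i]
    _ = p f := by
        rw [Finset.sum_const]
        simp only [Finset.card_univ, Fintype.card_fin, nsmul_eq_mul]
        field_simp
  -- Step 1: ghost sample
  have hstep1 : ∫ z, Φ z ∂μn ≤ ∫ q, Ψp q ∂(μn.prod μn) := by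
    rw [integral_prod _ hΨpint]
    refine integral_mono hΦint hΨpint.integral_prod_left fun z => ?_
    show Φ z ≤ ∫ z', Ψp (z, z') ∂μn
    have hinnerM : Measurable fun z' => Ψp (z, z') := hΨpM.comp measurable_prodMk_left
    have hinner_int : Integrable (fun z' => Ψp (z, z')) μn :=
      aux_integrable_of_bdd hinnerM.aestronglyMeasurable _ fun z' => hΨpbd (z, z')
    refine Finset.sup'_le hF _ fun f hf => ?_
    have hfInt : Integrable (fun z' => emp f z') μn :=
      aux_integrable_of_bdd (hempM f hf).aestronglyMeasurable 1 fun z' => by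
        rw [abs_of_nonneg (hempnn f z')]; exact hemple f z'
    have hval : p f - (1 + c) * emp f z = ∫ z', (emp f z' - (1 + c) * emp f z) ∂μn := by
      rw [integral_sub hfInt (integrable_const _), hempInt f hf, integral_const]
      simp [measure_univ]
    rw [hval]
    refine integral_mono (hfInt.sub (integrable_const _)) hinner_int fun z' => ?_
    exact Finset.le_sup' (fun f => emp f z' - (1 + c) * emp f z) hf
  -- Step 2: move to sum-indexed pi measure
  have hmpE := measurePreserving_sumPiEquivProdPi (X := fun _ : Fin n ⊕ Fin n => 𝒳)
    (fun _ : Fin n ⊕ Fin n => μ)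
  have hstep2 : ∫ q, Ψp q ∂(μn.prod μn) = ∫ w, Ψ w ∂ν := by
    rw [← hmpE.integral_comp' Ψp]
    rfl
  -- the swaps
  set sw : (Fin n → Bool) → (Fin n ⊕ Fin n) → (Fin n ⊕ Fin n) := fun ε =>
    Sum.elim (fun i => if ε i then Sum.inr i else Sum.inl i)
      (fun i => if ε i then Sum.inl i else Sum.inr i) with hsw
  have hswinv : ∀ ε j, sw ε (sw ε j) = j := by
    intro ε j
    cases j with
    | inl i => by_cases h : ε i <;> simp [hsw, h]
    | inr i => by_cases h : ε i <;> simp [hsw, h]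
  set σ : (Fin n → Bool) → Equiv.Perm (Fin n ⊕ Fin n) :=
    fun ε => ⟨sw ε, sw ε, hswinv ε, hswinv ε⟩ with hσ
  set T : (Fin n → Bool) → (((Fin n ⊕ Fin n) → 𝒳) ≃ᵐ ((Fin n ⊕ Fin n) → 𝒳)) :=
    fun ε => MeasurableEquiv.piCongrLeft (fun _ : Fin n ⊕ Fin n => 𝒳) (σ ε) with hT
  have hmpT : ∀ ε, MeasurePreserving (T ε) ν ν :=
    fun ε => measurePreserving_piCongrLeft (fun _ : Fin n ⊕ Fin n => μ) (σ ε)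
  have hTapp : ∀ ε w j, (T ε) w j = w (σ ε j) := by
    intro ε w j
    have h1 : (T ε) w (σ ε (σ ε j)) = w (σ ε j) := by
      rw [hT]
      exact MeasurableEquiv.piCongrLeft_apply_apply (β := fun _ : Fin n ⊕ Fin n => 𝒳) (σ ε) w (σ ε j)
    have h2 : σ ε (σ ε j) = j := hswinv ε j
    rwa [h2] at h1
  have hTint : ∀ ε : Fin n → Bool, Integrable (fun w => Ψ ((T ε) w)) ν := fun ε =>
    aux_integrable_of_bdd (hΨM.comp (T ε).measurable).aestronglyMeasurable _
      fun w => hΨbd _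
  have hsum : ∫ w, Ψ w ∂ν
      = ((2:ℝ) ^ n)⁻¹ * ∫ w, (∑ ε : Fin n → Bool, Ψ ((T ε) w)) ∂ν := by
    rw [integral_finset_sum _ fun ε _ => hTint ε]
    have hsame : ∀ ε : Fin n → Bool, ∫ w, Ψ ((T ε) w) ∂ν = ∫ w, Ψ w ∂ν :=
      fun ε => (hmpT ε).integral_comp' Ψ
    rw [Finset.sum_congr rfl fun ε _ => hsame ε, Finset.sum_const, Finset.card_univ,
      nsmul_eq_mul]
    rw [show (Fintype.card (Fin n → Bool) : ℝ) = (2:ℝ) ^ n by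
      rw [Fintype.card_fun]; push_cast; norm_num]
    rw [← mul_assoc, inv_mul_cancel₀ (by positivity), one_mul]
  -- growth function facts
  have hS1 : 1 ≤ growthFn (↑F : Set (𝒳 → Bool)) n := by
    obtain ⟨x0⟩ := hX
    have h1 : 1 ≤ (F.image fun f : 𝒳 → Bool => f ∘ (fun _ : Fin n => x0)).card :=
      (hF.image _).card_pos
    exact le_trans h1 (aux_image_card_le_growth F _)
  have hSR : (1:ℝ) ≤ (growthFn (↑F : Set (𝒳 → Bool)) n : ℝ) := by exact_mod_cast hS1
  set K : ℝ := 2 * (1 + c / 2) ^ 2 / c * Real.log (growthFn (↑F : Set (𝒳 → Bool)) n) / n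
    with hK
  -- pointwise bound
  have hptw : ∀ w, ∑ ε : Fin n → Bool, Ψ ((T ε) w) ≤ (2:ℝ) ^ n * K := by
    intro w
    have hVne : (F.image fun f : 𝒳 → Bool => f ∘ w).Nonempty := hF.image _
    set dd : ((Fin n ⊕ Fin n) → Bool) → Fin n → ℝ := fun v i =>
      (if v (Sum.inr i) ≠ fs (w (Sum.inr i)) then (1:ℝ) else 0) -
        (if v (Sum.inl i) ≠ fs (w (Sum.inl i)) then (1:ℝ) else 0) with hdd
    have hkey : ∀ (ε : Fin n → Bool), ∀ f ∈ F,
        emp f (fun i => (T ε) w (Sum.inr i)) - (1 + c) * emp f (fun i => (T ε) w (Sum.inl i))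
          ≤ (n:ℝ)⁻¹ * ∑ i, ((1 + c/2) * (if ε i then -1 else 1) * dd (f ∘ w) i
              - c/2 * dd (f ∘ w) i ^ 2) := by
      intro ε f hf
      have hrw : emp f (fun i => (T ε) w (Sum.inr i))
            - (1 + c) * emp f (fun i => (T ε) w (Sum.inl i))
          = (n:ℝ)⁻¹ * ∑ i, (g f ((T ε) w (Sum.inr i))
              - (1 + c) * g f ((T ε) w (Sum.inl i))) := by
        have hgen : ∀ (A B : Fin n → ℝ), ((n:ℝ)⁻¹ * ∑ i, A i) - (1 + c) * ((n:ℝ)⁻¹ * ∑ i, B i)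
            = (n:ℝ)⁻¹ * ∑ i, (A i - (1 + c) * B i) := by
          intro A B
          simp only [Finset.mul_sum, ← Finset.sum_sub_distrib]
          exact Finset.sum_congr rfl fun i _ => by ring
        exact hgen _ _
      rw [hrw]
      refine mul_le_mul_of_nonneg_left (Finset.sum_le_sum fun i _ => ?_) (by positivity)
      have hddval : dd (f ∘ w) i = g f (w (Sum.inr i)) - g f (w (Sum.inl i)) := rfl
      have hl : (T ε) w (Sum.inl i) = w (if ε i then Sum.inr i else Sum.inl i) := by
        rw [hTapp]
        congr 1
      have hr : (T ε) w (Sum.inr i) = w (if ε i then Sum.inl i else Sum.inr i) := by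
        rw [hTapp]
        congr 1
      rw [hl, hr, hddval]
      by_cases hε : ε i
      · simp only [if_pos hε]
        rcases hg01 f (w (Sum.inl i)) with h1 | h1 <;>
          rcases hg01 f (w (Sum.inr i)) with h2 | h2 <;> rw [h1, h2] <;> nlinarith
      · simp only [if_neg hε]
        rcases hg01 f (w (Sum.inl i)) with h1 | h1 <;>
          rcases hg01 f (w (Sum.inr i)) with h2 | h2 <;> rw [h1, h2] <;> nlinarith
    have hsupV : ∀ ε : Fin n → Bool,
        Ψ ((T ε) w) ≤ (n:ℝ)⁻¹ * (F.image fun f : 𝒳 → Bool => f ∘ w).sup' hVne (fun v => ∑ i,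
          ((1 + c/2) * (if ε i then -1 else 1) * dd v i - c/2 * dd v i ^ 2)) := by
      intro ε
      have h2 : (n:ℝ)⁻¹ * (F.image fun f : 𝒳 → Bool => f ∘ w).sup' hVne (fun v => ∑ i,
            ((1 + c/2) * (if ε i then -1 else 1) * dd v i - c/2 * dd v i ^ 2))
          = (F.image fun f : 𝒳 → Bool => f ∘ w).sup' hVne (fun v => (n:ℝ)⁻¹ * ∑ i,
            ((1 + c/2) * (if ε i then -1 else 1) * dd v i - c/2 * dd v i ^ 2)) :=
        aux_const_mul_sup' _ hVne _ _ (by positivity)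
      rw [h2, Finset.sup'_image]
      refine Finset.sup'_le hF _ fun f hf => ?_
      refine le_trans (hkey ε f hf) ?_
      exact Finset.le_sup' (fun f : 𝒳 → Bool => (n:ℝ)⁻¹ * ∑ i,
        ((1 + c/2) * (if ε i then -1 else 1) * dd (f ∘ w) i - c/2 * dd (f ∘ w) i ^ 2)) hf
    have hmax := aux_offset_max (F.image fun f : 𝒳 → Bool => f ∘ w) hVne dd (1 + c/2) (c/2) (by linarith) (by linarith)
    have hcardR : ((F.image fun f : 𝒳 → Bool => f ∘ w).card : ℝ) ≤ (growthFn (↑F : Set (𝒳 → Bool)) n : ℝ)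
        * (growthFn (↑F : Set (𝒳 → Bool)) n : ℝ) := by
      have h1 := aux_pair_card_le F w
      have h2 := Nat.mul_le_mul (aux_image_card_le_growth F (w ∘ Sum.inl))
        (aux_image_card_le_growth F (w ∘ Sum.inr))
      exact_mod_cast le_trans h1 h2
    have hV1 : (1:ℝ) ≤ ((F.image fun f : 𝒳 → Bool => f ∘ w).card : ℝ) := by exact_mod_cast hVne.card_pos
    have hS0 : (growthFn (↑F : Set (𝒳 → Bool)) n : ℝ) ≠ 0 := by linarith
    have hlogV : Real.log ((F.image fun f : 𝒳 → Bool => f ∘ w).card) ≤ 2 * Real.log (growthFn (↑F : Set (𝒳 → Bool)) n) := by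
      have hlog1 := Real.log_le_log (by linarith) hcardR
      rwa [Real.log_mul hS0 hS0, ← two_mul] at hlog1
    calc ∑ ε : Fin n → Bool, Ψ ((T ε) w)
        ≤ ∑ ε : Fin n → Bool, (n:ℝ)⁻¹ * (F.image fun f : 𝒳 → Bool => f ∘ w).sup' hVne (fun v => ∑ i,
            ((1 + c/2) * (if ε i then -1 else 1) * dd v i - c/2 * dd v i ^ 2)) :=
          Finset.sum_le_sum fun ε _ => hsupV ε
    _ = (n:ℝ)⁻¹ * ∑ ε : Fin n → Bool, (F.image fun f : 𝒳 → Bool => f ∘ w).sup' hVne (fun v => ∑ i,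
            ((1 + c/2) * (if ε i then -1 else 1) * dd v i - c/2 * dd v i ^ 2)) :=
          (Finset.mul_sum _ _ _).symm
    _ ≤ (n:ℝ)⁻¹ * (2 ^ n * ((1 + c/2) ^ 2 / (2 * (c/2)) * Real.log ((F.image fun f : 𝒳 → Bool => f ∘ w).card))) :=
          mul_le_mul_of_nonneg_left hmax (by positivity)
    _ ≤ (n:ℝ)⁻¹ * (2 ^ n * ((1 + c/2) ^ 2 / (2 * (c/2))
          * (2 * Real.log (growthFn (↑F : Set (𝒳 → Bool)) n)))) := by
          have hcoef : (0:ℝ) ≤ (1 + c/2) ^ 2 / (2 * (c/2)) := by positivity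
          have := mul_le_mul_of_nonneg_left hlogV hcoef
          have h2n : (0:ℝ) ≤ (2:ℝ) ^ n := by positivity
          nlinarith [mul_le_mul_of_nonneg_left (mul_le_mul_of_nonneg_left this h2n)
            (by positivity : (0:ℝ) ≤ (n:ℝ)⁻¹)]
    _ = (2:ℝ) ^ n * K := by
          rw [hK]
          field_simp
  -- conclude
  have hintsum : Integrable (fun w => ∑ ε : Fin n → Bool, Ψ ((T ε) w)) ν :=
    integrable_finset_sum _ fun ε _ => hTint ε
  have hfinal2 : ∫ w, (∑ ε : Fin n → Bool, Ψ ((T ε) w)) ∂ν ≤ (2:ℝ) ^ n * K := by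
    calc ∫ w, (∑ ε : Fin n → Bool, Ψ ((T ε) w)) ∂ν
        ≤ ∫ _w, (2:ℝ) ^ n * K ∂ν := integral_mono hintsum (integrable_const _) hptw
    _ = (2:ℝ) ^ n * K := by rw [integral_const]; simp [measure_univ]
  calc ∫ z, Φ z ∂μn ≤ ∫ q, Ψp q ∂(μn.prod μn) := hstep1
  _ = ∫ w, Ψ w ∂ν := hstep2
  _ = ((2:ℝ) ^ n)⁻¹ * ∫ w, (∑ ε : Fin n → Bool, Ψ ((T ε) w)) ∂ν := hsum
  _ ≤ ((2:ℝ) ^ n)⁻¹ * ((2:ℝ) ^ n * K) :=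
      mul_le_mul_of_nonneg_left hfinal2 (by positivity)
  _ = K := by
      rw [← mul_assoc, inv_mul_cancel₀ (by positivity), one_mul]
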